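/- Let H, K, E be Hilbert spaces and V: K → H ⊗ E an isometry. If the map f: B(H) → B(K), f(a) = V† (a ⊗ id_E) V, is a unital *-homomorphism and the representation (E, V) is minimal in the sense that the closed span of {(a ⊗ id_E)V(ξ) : a ∈ B(H), ξ ∈ K} is all of H ⊗ E, then V is unitary. -/

import Mathlib

open scoped ComplexOrder
open ContinuousLinearMap

noncomputable section

/-- A realisation of the Hilbert space tensor product `H ⊗ E` as a Hilbert space `T`:
a bilinear map `tmul` with total span dense, whose inner ℂ products multiply, together with
the operator tensor product `map a b = a ⊗ b` characterised on elementary tensors. -/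
structure HilbertTensor (H E T : Type*)
    [NormedAddCommGroup H] [InnerProductSpace ℂ H] [CompleteSpace H]
    [NormedAddCommGroup E] [InnerProductSpace ℂ E] [CompleteSpace E]
    [NormedAddCommGroup T] [InnerProductSpace ℂ T] [CompleteSpace T] where
  tmul : H →L[ℂ] E →L[ℂ] T
  inner_tmul : ∀ (h h' : H) (e e' : E),
    (inner ℂ (tmul h e) (tmul h' e') : ℂ) = (inner ℂ h h' : ℂ) * (inner ℂ e e' : ℂ)
  dense_span :
    (Submodule.span ℂ (Set.range fun p : H × E => tmul p.1 p.2)).topologicalClosure = ⊤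
  map : (H →L[ℂ] H) → (E →L[ℂ] E) → (T →L[ℂ] T)
  map_tmul : ∀ (a : H →L[ℂ] H) (b : E →L[ℂ] E) (h : H) (e : E),
    map a b (tmul h e) = tmul (a h) (b e)

/-- A map `f : B(H) → B(K)` is completely positive if all the block quadratic forms
`∑ᵢⱼ ⟪ξᵢ, f(aᵢ* aⱼ) ξⱼ⟫` are nonnegative. -/
def IsCompletelyPositive {H K : Type*}
    [NormedAddCommGroup H] [InnerProductSpace ℂ H] [CompleteSpace H]
    [NormedAddCommGroup K] [InnerProductSpace ℂ K] [CompleteSpace K]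
    (f : (H →L[ℂ] H) → (K →L[ℂ] K)) : Prop :=
  ∀ (n : ℕ) (a : Fin n → (H →L[ℂ] H)) (ξ : Fin n → K),
    0 ≤ ∑ i, ∑ j, (inner ℂ (ξ i) ((f (star (a i) * a j)) (ξ j)) : ℂ)

section Aux

variable {H E T : Type*}
    [NormedAddCommGroup H] [InnerProductSpace ℂ H] [CompleteSpace H]
    [NormedAddCommGroup E] [InnerProductSpace ℂ E] [CompleteSpace E]
    [NormedAddCommGroup T] [InnerProductSpace ℂ T] [CompleteSpace T]

/-- Two continuous linear maps out of `T` agreeing on elementary tensors are equal. -/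
lemma HilbertTensor.ext_tmul (τ : HilbertTensor H E T) {M : Type*}
    [NormedAddCommGroup M] [NormedSpace ℂ M]
    {A B : T →L[ℂ] M} (hAB : ∀ h e, A (τ.tmul h e) = B (τ.tmul h e)) : A = B := by
  refine ContinuousLinearMap.ext_on
    (Submodule.dense_iff_topologicalClosure_eq_top.mpr τ.dense_span) ?_
  rintro _ ⟨p, rfl⟩
  exact hAB p.1 p.2

lemma HilbertTensor.adjoint_map_one (τ : HilbertTensor H E T) (a : H →L[ℂ] H) :
    adjoint (τ.map a 1) = τ.map (adjoint a) 1 := by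
  refine τ.ext_tmul fun h e => ?_
  have key : (innerSL ℂ) (adjoint (τ.map a 1) (τ.tmul h e) - τ.map (adjoint a) 1 (τ.tmul h e))
      = 0 := by
    refine τ.ext_tmul fun h' e' => ?_
    simp only [innerSL_apply_apply, ContinuousLinearMap.zero_apply, inner_sub_left]
    rw [adjoint_inner_left, τ.map_tmul, τ.map_tmul, τ.inner_tmul, τ.inner_tmul,
      adjoint_inner_left]
    simp
  have := congrArg (fun φ : T →L[ℂ] ℂ =>
    φ (adjoint (τ.map a 1) (τ.tmul h e) - τ.map (adjoint a) 1 (τ.tmul h e))) key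
  simp only [innerSL_apply_apply, ContinuousLinearMap.zero_apply, inner_self_eq_zero,
    sub_eq_zero] at this
  exact this

lemma HilbertTensor.map_one_comp (τ : HilbertTensor H E T) (a b : H →L[ℂ] H) :
    τ.map a 1 ∘L τ.map b 1 = τ.map (a * b) 1 := by
  refine τ.ext_tmul fun h e => ?_
  simp [τ.map_tmul, ContinuousLinearMap.mul_apply]

end Aux

/-- If `f(a) = V† (a ⊗ id_E) V` is a unital *-homomorphism for an isometry `V`, and the
representation `(E,V)` is minimal (the span of `(a ⊗ id_E) V ξ` is dense in `H ⊗ E`), then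
`V` is unitary. -/
theorem minimal_star_hom_representation_unitary
    {H K E T : Type*}
    [NormedAddCommGroup H] [InnerProductSpace ℂ H] [CompleteSpace H]
    [NormedAddCommGroup K] [InnerProductSpace ℂ K] [CompleteSpace K]
    [NormedAddCommGroup E] [InnerProductSpace ℂ E] [CompleteSpace E]
    [NormedAddCommGroup T] [InnerProductSpace ℂ T] [CompleteSpace T]
    (τ : HilbertTensor H E T) (V : K →L[ℂ] T)
    (hisometry : adjoint V ∘L V = 1)
    (f : (H →L[ℂ] H) → (K →L[ℂ] K))
    (hf : ∀ a, f a = adjoint V ∘L τ.map a 1 ∘L V)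
    (hunital : f 1 = 1)
    (hmul : ∀ a b, f (a * b) = f a * f b)
    (hstar : ∀ a, f (star a) = star (f a))
    (hmin : (Submodule.span ℂ
        {z : T | ∃ (a : H →L[ℂ] H) (ξ : K), z = τ.map a 1 (V ξ)}).topologicalClosure = ⊤) :
    adjoint V ∘L V = 1 ∧ V ∘L adjoint V = 1 := by
  refine ⟨hisometry, ?_⟩
  refine ContinuousLinearMap.ext_on
    (Submodule.dense_iff_topologicalClosure_eq_top.mpr hmin) ?_
  rintro _ ⟨a, ξ, rfl⟩
  set z : T := τ.map a 1 (V ξ) with hz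
  -- key norm identity : ⟪z, z⟫ = ⟪V† z, V† z⟫
  have hVV : ∀ x : K, adjoint V (V x) = x := fun x => by
    have := congrArg (fun A : K →L[ℂ] K => A x) hisometry
    simpa using this
  have key : (inner ℂ z z : ℂ) = inner ℂ (adjoint V z) (adjoint V z) := by
    have h1 : (inner ℂ z z : ℂ) = inner ℂ (V ξ) (τ.map (star a * a) 1 (V ξ)) := by
      rw [hz, ← ContinuousLinearMap.adjoint_inner_right, τ.adjoint_map_one,
        ← ContinuousLinearMap.comp_apply, τ.map_one_comp, ContinuousLinearMap.star_eq_adjoint]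
    have h2 : adjoint V z = f a ξ := by
      rw [hf a]; simp [hz]
    have h3 : (inner ℂ (adjoint V z) (adjoint V z) : ℂ) = inner ℂ ξ (f (star a * a) ξ) := by
      rw [h2, ← ContinuousLinearMap.adjoint_inner_right, ← ContinuousLinearMap.star_eq_adjoint,
        ← hstar, hmul, ContinuousLinearMap.mul_apply]
    rw [h1, h3, hf (star a * a)]
    simp [ContinuousLinearMap.adjoint_inner_right]
  -- show (V ∘L V†) z = z
  have hsub : (inner ℂ (z - V (adjoint V z)) (z - V (adjoint V z)) : ℂ) = 0 := by
    have e1 : (inner ℂ z (V (adjoint V z)) : ℂ) = inner ℂ (adjoint V z) (adjoint V z) := by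
      rw [← ContinuousLinearMap.adjoint_inner_left]
    have e2 : (inner ℂ (V (adjoint V z)) z : ℂ) = inner ℂ (adjoint V z) (adjoint V z) := by
      rw [← ContinuousLinearMap.adjoint_inner_right]
    have e3 : (inner ℂ (V (adjoint V z)) (V (adjoint V z)) : ℂ)
        = inner ℂ (adjoint V z) (adjoint V z) := by
      rw [← ContinuousLinearMap.adjoint_inner_right, hVV]
    rw [inner_sub_sub_self, e1, e2, e3, ← key]
    ring
  have : z - V (adjoint V z) = 0 := inner_self_eq_zero.mp hsub
  rw [sub_eq_zero] at this
  simpa using this.symm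

end
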